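/- (Gauss–Jacobi–Christoffel quadrature) Let u be a positive-definite linear functional with monic OPS (P_n), and let x_{n,1}, …, x_{n,n} be the zeros of P_n. Then for each n ≥ 1 there exist positive reals A_{n,1}, …, A_{n,n} such that ⟨u, p⟩ = ∑_{j=1}^n A_{n,j} p(x_{n,j}) for every polynomial p of degree at most 2n − 1; moreover ∑_{j=1}^n A_{n,j} = ⟨u, 1⟩. -/

import Mathlib

open Polynomial

def PosDefFunctional (u : Polynomial ℂ →ₗ[ℂ] ℂ) : Prop :=
  ∀ p : Polynomial ℝ, p ≠ 0 → (∀ x : ℝ, 0 ≤ p.eval x) →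
    ∃ r : ℝ, 0 < r ∧ u (p.map (algebraMap ℝ ℂ)) = (r : ℂ)

/-- Gauss–Jacobi–Christoffel quadrature formula: there are positive weights `A_{n,j}` at the
zeros of `Pₙ` such that `⟨u, p⟩ = ∑ⱼ A_{n,j} p(x_{n,j})` for all `p` of degree `≤ 2n − 1`,
and the weights sum to `⟨u, 1⟩`. -/
theorem gauss_jacobi_christoffel_quadrature (u : Polynomial ℂ →ₗ[ℂ] ℂ)
    (hpos : PosDefFunctional u)
    (P : ℕ → Polynomial ℂ)
    (hmonic : ∀ n, (P n).Monic) (hdeg : ∀ n, (P n).degree = n)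
    (horth : ∀ m n, m ≠ n → u (P m * P n) = 0)
    (hreg : ∀ n, u (P n * P n) ≠ 0)
    (n : ℕ) (hn : 1 ≤ n)
    (xs : Fin n → ℝ) (hmono : StrictMono xs)
    (hroots : P n = ∏ j : Fin n, (X - C ((xs j : ℝ) : ℂ))) :
    ∃ A : Fin n → ℝ, (∀ j, 0 < A j) ∧
      (∀ p : Polynomial ℂ, p.degree ≤ (2 * n - 1 : ℕ) →
        u p = ∑ j : Fin n, (A j : ℂ) * p.eval ((xs j : ℝ) : ℂ)) ∧
      (∑ j : Fin n, (A j : ℂ)) = u 1 := by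
  classical
  set v : Fin n → ℂ := fun j => ((xs j : ℝ) : ℂ) with hv
  -- injectivity of nodes
  have hinj : Set.InjOn v (Finset.univ : Finset (Fin n)) := by
    intro a _ b _ hab
    exact hmono.injective (Complex.ofReal_inj.mp hab)
  have hcard : (Finset.univ : Finset (Fin n)).card = n := by simp
  -- orthogonality to all lower-degree polynomials
  have key : ∀ m : ℕ, ∀ q : Polynomial ℂ, q.natDegree ≤ m → q.degree < (n : WithBot ℕ) →
      u (P n * q) = 0 := by
    intro m
    induction m with
    | zero =>
      intro q hq hd
      obtain ⟨c, rfl⟩ := Polynomial.natDegree_eq_zero.mp (Nat.le_zero.mp hq)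
      have h0 : P 0 = 1 := by
        refine (hmonic 0).natDegree_eq_zero.mp ?_
        have := hdeg 0
        simpa [Polynomial.natDegree, this] using congrArg Polynomial.natDegree (hdeg 0) |>.symm ▸ rfl
      have horth0 : u (P n * P 0) = 0 := horth n 0 (by omega)
      have : P n * C c = c • (P n * P 0) := by
        rw [h0]; ring_nf; rw [Polynomial.smul_eq_C_mul]; ring
      rw [this, map_smul, horth0, smul_zero]
    | succ m ih =>
      intro q hq hd
      by_cases h0 : q = 0
      · simp [h0]
      by_cases hle : q.natDegree ≤ m
      · exact ih q hle hd
      have hdq : q.natDegree = m + 1 := by omega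
      set d := q.natDegree with hdd
      set c := q.leadingCoeff with hc
      have hcne : c ≠ 0 := leadingCoeff_ne_zero.mpr h0
      have hdegc : (C c * P d).degree = q.degree := by
        rw [degree_C_mul hcne, hdeg d, degree_eq_natDegree h0]
      have hlc : (C c * P d).leadingCoeff = q.leadingCoeff := by
        rw [leadingCoeff_mul, leadingCoeff_C, (hmonic d).leadingCoeff, mul_one]
      have hsub : (q - C c * P d).degree < q.degree :=
        degree_sub_lt hdegc.symm h0 hlc.symm
      have hdn : (d : WithBot ℕ) < (n : WithBot ℕ) := by
        rwa [degree_eq_natDegree h0] at hd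
      have hsplit : q = (q - C c * P d) + C c * P d := by ring
      have hnat : (q - C c * P d).natDegree ≤ m := by
        by_cases hz : q - C c * P d = 0
        · simp [hz]
        · have := (Polynomial.natDegree_lt_iff_degree_lt hz).mpr
            (lt_of_lt_of_le hsub (degree_le_natDegree))
          omega
      have hdeg' : (q - C c * P d).degree < (n : WithBot ℕ) :=
        lt_trans hsub hd
      have h1 : u (P n * (q - C c * P d)) = 0 := ih _ hnat hdeg'
      have h2 : u (P n * P d) = 0 := horth n d (by
        intro h; rw [h] at hdn; exact lt_irrefl _ (by exact_mod_cast hdn))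
      calc u (P n * q) = u (P n * (q - C c * P d) + c • (P n * P d)) := by
            congr 1
            rw [Polynomial.smul_eq_C_mul]; ring
        _ = 0 := by rw [map_add, map_smul, h1, h2, smul_zero, add_zero]
  -- complex Lagrange basis
  set L : Fin n → Polynomial ℂ := fun j => Lagrange.basis Finset.univ v j with hL
  have hPn_eval : ∀ j, (P n).eval (v j) = 0 := by
    intro j
    rw [hroots, eval_prod]
    exact Finset.prod_eq_zero (Finset.mem_univ j) (by simp [hv])
  -- exactness with weights u (L j)
  have exact0 : ∀ p : Polynomial ℂ, p.degree ≤ ((2 * n - 1 : ℕ) : WithBot ℕ) →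
      u p = ∑ j : Fin n, u (L j) * p.eval (v j) := by
    intro p hp
    have hm := hmonic n
    have hdiv : p %ₘ P n + P n * (p /ₘ P n) = p := modByMonic_add_div p (P n)
    set q := p /ₘ P n with hq
    set r := p %ₘ P n with hr
    have hqdeg : q.degree < (n : WithBot ℕ) := by
      by_cases hz : q = 0
      · rw [hz, degree_zero]; exact bot_lt_iff_ne_bot.mpr (by simp)
      · rw [degree_eq_natDegree hz, Nat.cast_lt, hq, natDegree_divByMonic p hm]
        have hpn : p.natDegree ≤ 2 * n - 1 := natDegree_le_iff_degree_le.mpr hp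
        have : (P n).natDegree = n := natDegree_eq_of_degree_eq_some (hdeg n)
        omega
    have hrdeg : r.degree < ((Finset.univ : Finset (Fin n)).card : WithBot ℕ) := by
      rw [hcard]
      exact lt_of_lt_of_le (degree_modByMonic_lt p hm) (le_of_eq (hdeg n))
    have hinterp : Lagrange.interpolate Finset.univ v (fun i => r.eval (v i)) = r :=
      (Lagrange.eq_interpolate hinj hrdeg).symm
    have hur : u r = ∑ j : Fin n, u (L j) * r.eval (v j) := by
      conv_lhs => rw [← hinterp, Lagrange.interpolate_apply]
      rw [map_sum]
      refine Finset.sum_congr rfl fun j _ => ?_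
      rw [← Polynomial.smul_eq_C_mul, map_smul, smul_eq_mul, mul_comm]
    have hPq : u (P n * q) = 0 := key q.natDegree q le_rfl hqdeg
    have hup : u p = u r := by
      conv_lhs => rw [← hdiv]
      rw [map_add, hPq, add_zero]
    have heval : ∀ j, p.eval (v j) = r.eval (v j) := by
      intro j
      conv_lhs => rw [← hdiv]
      simp [hPn_eval j]
    rw [hup, hur]
    exact Finset.sum_congr rfl fun j _ => by rw [heval j]
  -- real Lagrange basis and its map
  set ℓ : Fin n → Polynomial ℝ := fun j => Lagrange.basis Finset.univ xs j with hℓ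
  have hmap : ∀ j, (ℓ j).map (algebraMap ℝ ℂ) = L j := by
    intro j
    simp only [hℓ, hL, Lagrange.basis, Polynomial.map_prod, Lagrange.basisDivisor,
      Polynomial.map_mul, Polynomial.map_sub, Polynomial.map_C, Polynomial.map_X,
      map_inv₀, map_sub]
    rfl
  have hinjℝ : Set.InjOn xs (Finset.univ : Finset (Fin n)) :=
    fun a _ b _ h => hmono.injective h
  -- positivity
  have hpos' : ∀ j, ∃ r : ℝ, 0 < r ∧ u (L j ^ 2) = (r : ℂ) := by
    intro j
    obtain ⟨r, hr, hur⟩ := hpos (ℓ j ^ 2)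
      (pow_ne_zero 2 (Lagrange.basis_ne_zero hinjℝ (Finset.mem_univ j)))
      (fun x => by rw [eval_pow]; exact sq_nonneg _)
    refine ⟨r, hr, ?_⟩
    rw [← hur, Polynomial.map_pow, hmap j]
  choose B hBpos hBu using hpos'
  -- evaluate exactness at L j ^ 2 to get u (L j) = B j
  have hLdeg : ∀ j, (L j).natDegree = n - 1 := by
    intro j
    rw [hL]
    simpa [hcard] using Lagrange.natDegree_basis hinj (Finset.mem_univ j)
  have hLeval : ∀ j k, (L j).eval (v k) = if j = k then 1 else 0 := by
    intro j k
    by_cases h : j = k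
    · subst h; simp [hL, Lagrange.eval_basis_self hinj (Finset.mem_univ j)]
    · simp [h, hL, Lagrange.eval_basis_of_ne h (Finset.mem_univ k)]
  have huL : ∀ j, u (L j) = (B j : ℂ) := by
    intro j
    have hdeg2 : (L j ^ 2).degree ≤ ((2 * n - 1 : ℕ) : WithBot ℕ) := by
      apply natDegree_le_iff_degree_le.mp
      rw [natDegree_pow, hLdeg j]
      omega
    have hsum : ∑ k : Fin n, u (L k) * (L j ^ 2).eval (v k) = u (L j) := by
      calc ∑ k : Fin n, u (L k) * (L j ^ 2).eval (v k)
          = ∑ k : Fin n, u (L k) * (if j = k then 1 else 0) := by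
            refine Finset.sum_congr rfl fun k _ => ?_
            rw [eval_pow, hLeval j k]
            by_cases h : j = k <;> simp [h]
        _ = u (L j) := by simp
    rw [← hsum, ← exact0 (L j ^ 2) hdeg2, hBu j]
  refine ⟨B, hBpos, ?_, ?_⟩
  · intro p hp
    rw [exact0 p hp]
    exact Finset.sum_congr rfl fun j _ => by rw [huL j]
  · have h1 : u 1 = ∑ j : Fin n, u (L j) * (1 : Polynomial ℂ).eval (v j) :=
      exact0 1 (by rw [degree_one]; exact_mod_cast Nat.zero_le _)
    simpa [huL] using h1.symm
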